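/- Let n ∈ ℕ, p ∈ [0,1]^n, and let f : {0,1}^n → ℝ be any function. Define F(λ) = ∫ e^{λ f(x)} dμ_{e^{-λ}p}(x). Then F is differentiable at every λ ≥ 0, with derivative F'(λ) = ∫ f(x) e^{λ f(x)} dμ_{e^{-λ}p}(x) − Σ_{i=1}^{n} ∫ ( e^{λ f(x)} − e^{λ f(x_{i←0})} ) dμ_{e^{-λ}p}(x). -/

import Mathlib

open MeasureTheory

/-- The Bernoulli measure on `Bool` with parameter `q`. -/
noncomputable def bernoulliMeasure (q : ℝ) : Measure Bool :=
  (ENNReal.ofReal q) • Measure.dirac true + (ENNReal.ofReal (1 - q)) • Measure.dirac false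

/-- The product Bernoulli measure `μ_p` on `{0,1}^n`. -/
noncomputable def productBernoulli {n : ℕ} (p : Fin n → ℝ) : Measure (Fin n → Bool) :=
  Measure.pi fun i => bernoulliMeasure (p i)

lemma bernoulli_singleton (q : ℝ) (b : Bool) :
    bernoulliMeasure q {b} = ENNReal.ofReal (if b then q else 1 - q) := by
  cases b <;> simp [bernoulliMeasure, Measure.dirac_apply]

lemma bern_prob {q : ℝ} (h0 : 0 ≤ q) (h1 : q ≤ 1) :
    IsProbabilityMeasure (bernoulliMeasure q) := by
  constructor
  simp [bernoulliMeasure]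
  rw [← ENNReal.ofReal_add h0 (by linarith)]
  norm_num

lemma integral_productBernoulli {n : ℕ} (q : Fin n → ℝ) (hq : ∀ i, q i ∈ Set.Icc (0:ℝ) 1)
    (g : (Fin n → Bool) → ℝ) :
    ∫ x, g x ∂productBernoulli q
      = ∑ x : Fin n → Bool, (∏ i, if x i then q i else 1 - q i) * g x := by
  haveI : ∀ i, IsProbabilityMeasure (bernoulliMeasure (q i)) :=
    fun i => bern_prob (hq i).1 (hq i).2
  haveI : IsProbabilityMeasure (productBernoulli q) := by
    unfold productBernoulli; infer_instance
  rw [integral_fintype (.of_finite)]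
  refine Finset.sum_congr rfl fun x _ => ?_
  have hx : productBernoulli q {x}
      = ∏ i, ENNReal.ofReal (if x i then q i else 1 - q i) := by
    rw [show ({x} : Set (Fin n → Bool)) = Set.pi Set.univ (fun i => {x i}) from
      (Set.univ_pi_singleton x).symm]
    rw [productBernoulli, Measure.pi_pi]
    simp [bernoulli_singleton]
  rw [measureReal_def, hx, smul_eq_mul, ENNReal.toReal_prod]
  congr 1
  refine Finset.prod_congr rfl fun i _ => ?_
  rw [ENNReal.toReal_ofReal]
  rcases hq i with ⟨h0, h1⟩
  cases hxi : x i <;> simp <;> linarith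

lemma pair_sum {n : ℕ} (i : Fin n) (A : (Fin n → Bool) → ℝ) :
    (∑ x : Fin n → Bool, A x)
      = ∑ y : {j : Fin n // j ≠ i} → Bool,
          (A ((Equiv.funSplitAt i Bool).symm (true, y)) +
           A ((Equiv.funSplitAt i Bool).symm (false, y))) := by
  rw [← Equiv.sum_comp (Equiv.funSplitAt i Bool).symm A, Fintype.sum_prod_type,
    Fintype.sum_bool, ← Finset.sum_add_distrib]

lemma splitAt_same {n : ℕ} (i : Fin n) (b : Bool) (y : {j : Fin n // j ≠ i} → Bool) :
    (Equiv.funSplitAt i Bool).symm (b, y) i = b := by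
  simp [Equiv.funSplitAt, Equiv.piSplitAt]

lemma splitAt_ne {n : ℕ} {i j : Fin n} (h : j ≠ i) (b : Bool)
    (y : {j : Fin n // j ≠ i} → Bool) :
    (Equiv.funSplitAt i Bool).symm (b, y) j = y ⟨j, h⟩ := by
  simp [Equiv.funSplitAt, Equiv.piSplitAt, h]

lemma update_splitAt {n : ℕ} (i : Fin n) (b : Bool) (y : {j : Fin n // j ≠ i} → Bool) :
    Function.update ((Equiv.funSplitAt i Bool).symm (b, y)) i false
      = (Equiv.funSplitAt i Bool).symm (false, y) := by
  ext j
  by_cases h : j = i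
  · subst h; simp [splitAt_same]
  · simp [Function.update, h, splitAt_ne h]

lemma key {n : ℕ} (i : Fin n) (w : Fin n → Bool → ℝ) (E : (Fin n → Bool) → ℝ) :
    ∑ x : Fin n → Bool,
        (∏ j ∈ Finset.univ.erase i, w j (x j)) *
          ((if x i then -(w i true) else w i true) * E x)
      = - ∑ x : Fin n → Bool, (∏ j, w j (x j)) * (E x - E (Function.update x i false)) := by
  rw [pair_sum i, pair_sum i, ← Finset.sum_neg_distrib]
  refine Finset.sum_congr rfl fun y _ => ?_
  set xt := (Equiv.funSplitAt i Bool).symm (true, y) with hxt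
  set xf := (Equiv.funSplitAt i Bool).symm (false, y) with hxf
  have ht : xt i = true := splitAt_same i true y
  have hf : xf i = false := splitAt_same i false y
  have hP : ∀ j ∈ Finset.univ.erase i, w j (xt j) = w j (xf j) := by
    intro j hj
    have h : j ≠ i := (Finset.mem_erase.1 hj).1
    rw [hxt, hxf, splitAt_ne h, splitAt_ne h]
  have hPe : (∏ j ∈ Finset.univ.erase i, w j (xt j))
      = ∏ j ∈ Finset.univ.erase i, w j (xf j) := Finset.prod_congr rfl hP
  have hWt : (∏ j, w j (xt j)) = w i true * ∏ j ∈ Finset.univ.erase i, w j (xf j) := by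
    rw [← Finset.mul_prod_erase Finset.univ _ (Finset.mem_univ i), ht, hPe]
  have hWf : (∏ j, w j (xf j)) = w i false * ∏ j ∈ Finset.univ.erase i, w j (xf j) := by
    rw [← Finset.mul_prod_erase Finset.univ _ (Finset.mem_univ i), hf]
  rw [update_splitAt, update_splitAt, ht, hf, hPe, hWt, hWf]
  norm_num
  rw [← hxf]
  ring

/-- Derivative of `F(λ) = ∫ e^{λ f} dμ_{e^{-λ}p}`: for every `λ ≥ 0`,
`F'(λ) = E[Z^{(λ)} e^{λ Z^{(λ)}}] − Σᵢ E[e^{λ Z^{(λ)}} − e^{λ Zᵢ^{(λ)}}]`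
where `Zᵢ^{(λ)}` is obtained by setting the `i`-th coordinate to `0`. -/
theorem deriv_of_exp_scaled_expectation {n : ℕ} (p : Fin n → ℝ)
    (hp : ∀ i, p i ∈ Set.Icc (0 : ℝ) 1)
    (f : (Fin n → Bool) → ℝ)
    (F : ℝ → ℝ)
    (hF : F = fun l =>
      ∫ x, Real.exp (l * f x) ∂(productBernoulli (fun i => Real.exp (-l) * p i))) :
    ∀ l : ℝ, 0 ≤ l →
      HasDerivWithinAt F
        ((∫ x, f x * Real.exp (l * f x)
            ∂(productBernoulli (fun i => Real.exp (-l) * p i))) -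
          ∑ i : Fin n,
            ∫ x, (Real.exp (l * f x) - Real.exp (l * f (Function.update x i false)))
              ∂(productBernoulli (fun i => Real.exp (-l) * p i)))
        (Set.Ici 0) l := by
  intro l hl
  classical
  set w : ℝ → Fin n → Bool → ℝ :=
    fun s i b => if b then Real.exp (-s) * p i else 1 - Real.exp (-s) * p i with hw
  have hq01 : ∀ s : ℝ, 0 ≤ s → ∀ i, (Real.exp (-s) * p i) ∈ Set.Icc (0:ℝ) 1 := by
    intro s hs i
    have he1 : Real.exp (-s) ≤ 1 := Real.exp_le_one_iff.2 (by linarith)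
    have he0 : (0:ℝ) ≤ Real.exp (-s) := (Real.exp_pos _).le
    rcases hp i with ⟨h0, h1⟩
    constructor
    · exact mul_nonneg he0 h0
    · calc Real.exp (-s) * p i ≤ 1 * 1 := mul_le_mul he1 h1 h0 zero_le_one
        _ = 1 := one_mul 1
  set G : ℝ → ℝ :=
    fun s => ∑ x : Fin n → Bool, (∏ i, w s i (x i)) * Real.exp (s * f x) with hGdef
  have hFG : Set.EqOn F G (Set.Ici 0) := by
    intro s hs
    rw [hF, hGdef]
    exact integral_productBernoulli _ (hq01 s hs) _
  -- derivative of G at l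
  set D : ℝ :=
    ∑ x : Fin n → Bool,
      ((∑ i, (∏ j ∈ Finset.univ.erase i, w l j (x j)) *
          (if x i then -(Real.exp (-l) * p i) else Real.exp (-l) * p i)) * Real.exp (l * f x)
        + (∏ i, w l i (x i)) * (Real.exp (l * f x) * f x)) with hDdef
  have hG : HasDerivAt G D l := by
    rw [hGdef, hDdef]
    apply HasDerivAt.fun_sum
    intro x _
    have hwd : ∀ i : Fin n, HasDerivAt (fun s => w s i (x i))
        (if x i then -(Real.exp (-l) * p i) else Real.exp (-l) * p i) l := by
      intro i
      have hbase : HasDerivAt (fun s : ℝ => Real.exp (-s) * p i)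
          (-(Real.exp (-l) * p i)) l := by
        have h := ((hasDerivAt_id l).neg.exp.mul_const (p i))
        refine h.congr_deriv ?_
        simp only [Pi.neg_apply, id_eq]
        ring
      cases hxi : x i
      · simp only [hw, hxi, Bool.false_eq_true, if_false]
        have h := hbase.const_sub 1
        refine h.congr_deriv ?_
        ring
      · simp only [hw, hxi, if_true]
        exact hbase
    have hprod : HasDerivAt (fun s => ∏ i, w s i (x i))
        (∑ i, (∏ j ∈ Finset.univ.erase i, w l j (x j)) *
            (if x i then -(Real.exp (-l) * p i) else Real.exp (-l) * p i)) l := by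
      have h := HasDerivAt.finset_prod (u := Finset.univ)
        (f := fun i s => w s i (x i))
        (f' := fun i => if x i then -(Real.exp (-l) * p i) else Real.exp (-l) * p i)
        (fun i _ => hwd i)
      simpa [smul_eq_mul, mul_comm, Finset.prod_fn] using h
    have hexp : HasDerivAt (fun s => Real.exp (s * f x)) (Real.exp (l * f x) * f x) l := by
      have h := ((hasDerivAt_id l).mul_const (f x)).exp
      simpa using h
    exact hprod.mul hexp
  -- the target value equals D
  have hkey : ∀ i : Fin n,
      ∑ x : Fin n → Bool, ((∏ j ∈ Finset.univ.erase i, w l j (x j)) *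
          (if x i then -(Real.exp (-l) * p i) else Real.exp (-l) * p i)) * Real.exp (l * f x)
        = - ∑ x : Fin n → Bool, (∏ j, w l j (x j)) *
            (Real.exp (l * f x) - Real.exp (l * f (Function.update x i false))) := by
    intro i
    have hwt : w l i true = Real.exp (-l) * p i := by simp [hw]
    calc ∑ x : Fin n → Bool, ((∏ j ∈ Finset.univ.erase i, w l j (x j)) *
          (if x i then -(Real.exp (-l) * p i) else Real.exp (-l) * p i)) * Real.exp (l * f x)
        = ∑ x : Fin n → Bool, (∏ j ∈ Finset.univ.erase i, w l j (x j)) *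
            ((if x i then -(w l i true) else w l i true) * Real.exp (l * f x)) := by
          refine Finset.sum_congr rfl fun x _ => ?_
          rw [hwt]
          ring
      _ = _ := key i (w l) (fun x => Real.exp (l * f x))
  have hval : (∫ x, f x * Real.exp (l * f x)
        ∂(productBernoulli (fun i => Real.exp (-l) * p i))) -
      ∑ i : Fin n,
        ∫ x, (Real.exp (l * f x) - Real.exp (l * f (Function.update x i false)))
          ∂(productBernoulli (fun i => Real.exp (-l) * p i)) = D := by
    simp only [integral_productBernoulli _ (hq01 l hl)]
    rw [hDdef]
    rw [Finset.sum_add_distrib]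
    have h1 : ∑ x : Fin n → Bool,
        ((∑ i, (∏ j ∈ Finset.univ.erase i, w l j (x j)) *
          (if x i then -(Real.exp (-l) * p i) else Real.exp (-l) * p i)) * Real.exp (l * f x))
        = ∑ i : Fin n, ∑ x : Fin n → Bool,
            ((∏ j ∈ Finset.univ.erase i, w l j (x j)) *
              (if x i then -(Real.exp (-l) * p i) else Real.exp (-l) * p i)) *
                Real.exp (l * f x) := by
      rw [Finset.sum_comm]
      exact Finset.sum_congr rfl fun x _ => Finset.sum_mul _ _ _
    rw [h1]
    have h2 : ∀ i : Fin n, ∑ x : Fin n → Bool,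
        ((∏ j ∈ Finset.univ.erase i, w l j (x j)) *
          (if x i then -(Real.exp (-l) * p i) else Real.exp (-l) * p i)) * Real.exp (l * f x)
        = - ∑ x : Fin n → Bool, (∏ j, w l j (x j)) *
            (Real.exp (l * f x) - Real.exp (l * f (Function.update x i false))) := hkey
    rw [Finset.sum_congr rfl fun i _ => h2 i, Finset.sum_neg_distrib]
    have h3 : ∑ x : Fin n → Bool, (∏ i, w l i (x i)) * (Real.exp (l * f x) * f x)
        = ∑ x : Fin n → Bool,
            (∏ i, if x i then Real.exp (-l) * p i else 1 - Real.exp (-l) * p i) *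
              (f x * Real.exp (l * f x)) := by
      refine Finset.sum_congr rfl fun x _ => ?_
      rw [hw]
      ring
    rw [h3]
    ring_nf
    simp only [hw]
  rw [← hval] at hG
  exact hG.hasDerivWithinAt.congr hFG (hFG hl)
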